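/- If a cosimplicial (not necessarily commutative) k-algebra A is [0,1]-generated — i.e. the normalized differential graded algebra N(A) is generated in degrees 0 and 1 under the cup product and k-linear sums — then the total differential graded algebra C(A) is also generated in degrees 0 and 1 under the cup product and k-linear sums. -/

import Mathlib

/-!
# Statement 16: [0,1]-generation of the normalized complex implies [0,1]-generation

`k` is a field of characteristic zero.  A cosimplicial (not necessarily commutative)
`k`-algebra is a cosimplicial object `X` in the category of `k`-algebras.  Its total
complex has `C^n(X) = X^n`, the normalized subcomplex is
`N^n(X) = ∩_{i=0}^{n−1} ker(s^i : X^n → X^{n−1})`, and `C(X)` is a DG algebra under the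
Alexander–Whitney cup product `x ∪ y := (d^{p+q}⋯d^{p+1} x) · (d⁰⋯d⁰ y)` for
`x ∈ X^p`, `y ∈ X^q`.

The theorem (Lemma `NA_01gen_CA`) asserts: if the normalized DG algebra `N(X)` is
generated in degrees `0` and `1` under the cup product and `k`-linear sums, then so is
the total DG algebra `C(X)`.
-/

open CategoryTheory

namespace Stmt16

variable {k : Type} [Field k]

/-- The degree-`n` part of a cosimplicial `k`-algebra. -/
abbrev A (X : CosimplicialObject (AlgCat k)) (n : ℕ) : Type :=
  X.obj (SimplexCategory.mk n)

/-- Iterated top cofaces `d^{p+q} ⋯ d^{p+1} : X^p → X^{p+q}`. -/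
def front (X : CosimplicialObject (AlgCat k)) (p : ℕ) :
    ∀ q : ℕ, A X p → A X (p + q)
  | 0 => fun x => x
  | q + 1 => fun x => X.δ (Fin.last (p + q + 1)) (front X p q x)

/-- Iterated zeroth cofaces `d⁰ ⋯ d⁰ : X^q → X^{q+p}`. -/
def back (X : CosimplicialObject (AlgCat k)) (q : ℕ) :
    ∀ p : ℕ, A X q → A X (q + p)
  | 0 => fun y => y
  | p + 1 => fun y => X.δ (0 : Fin (q + p + 2)) (back X q p y)

/-- The Alexander–Whitney cup product
`x ∪ y := (d^{p+q}⋯d^{p+1} x) · (d⁰⋯d⁰ y) : X^{p+q}` for `x ∈ X^p`, `y ∈ X^q`. -/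
def cup (X : CosimplicialObject (AlgCat k)) {p q : ℕ}
    (x : A X p) (y : A X q) : A X (p + q) :=
  front X p q x * (Nat.add_comm q p ▸ back X q p y)

/-- The normalized part `N^n(X) = ∩_{i=0}^{n−1} ker(s^i)` of a cosimplicial algebra. -/
def Nrm (X : CosimplicialObject (AlgCat k)) : ∀ n : ℕ, Set (A X n)
  | 0 => Set.univ
  | m + 1 => {x | ∀ i : Fin (m + 1), X.σ i x = 0}

/-- The closure of a family of subsets `S n ⊆ X^n` under `k`-linear sums and the cup
product: `CupGen X S n x` says that `x ∈ X^n` is generated by the elements of `S` under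
cup products and `k`-linear combinations. -/
inductive CupGen (X : CosimplicialObject (AlgCat k))
    (S : ∀ n : ℕ, Set (A X n)) : ∀ n : ℕ, A X n → Prop
  | of {n : ℕ} {x : A X n} (hx : x ∈ S n) : CupGen X S n x
  | zero {n : ℕ} : CupGen X S n 0
  | add {n : ℕ} {x y : A X n} : CupGen X S n x → CupGen X S n y → CupGen X S n (x + y)
  | smul {n : ℕ} (c : k) {x : A X n} : CupGen X S n x → CupGen X S n (c • x)
  | cup {p q : ℕ} {x : A X p} {y : A X q} :
      CupGen X S p x → CupGen X S q y → CupGen X S (p + q) (cup X x y)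

/-- Generators for `N(X)` in degrees `0` and `1`: all of `N⁰(X) = X⁰` and `N¹(X)`. -/
def gensN (X : CosimplicialObject (AlgCat k)) : ∀ n : ℕ, Set (A X n)
  | 0 => Set.univ
  | 1 => Nrm X 1
  | _ + 2 => ∅

/-- Generators for `C(X)` in degrees `0` and `1`: all of `X⁰` and `X¹`. -/
def gensC (X : CosimplicialObject (AlgCat k)) : ∀ n : ℕ, Set (A X n)
  | 0 => Set.univ
  | 1 => Set.univ
  | _ + 2 => ∅
section Aux
variable {k : Type} [Field k] (X : CosimplicialObject (AlgCat k))

lemma cupgen_mono {S T : ∀ n : ℕ, Set (A X n)} (hST : ∀ n, S n ⊆ T n) {n : ℕ} {x : A X n}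
    (hx : CupGen X S n x) : CupGen X T n x := by
  induction hx with
  | of hx' => exact .of (hST _ hx')
  | zero => exact .zero
  | add _ _ ih1 ih2 => exact .add ih1 ih2
  | smul c _ ih => exact .smul c ih
  | cup _ _ ih1 ih2 => exact .cup ih1 ih2

lemma cupgen_heq {S : ∀ n : ℕ, Set (A X n)} {m m' : ℕ} (e : m = m') {a : A X m} {b : A X m'}
    (hab : HEq a b) (hb : CupGen X S m' b) : CupGen X S m a := by
  subst e
  rw [eq_of_heq hab]
  exact hb

lemma δ_congr {m m' : ℕ} (e : m = m') {i : Fin (m + 2)} {i' : Fin (m' + 2)}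
    (hi : (i : ℕ) = (i' : ℕ)) {a : A X m} {b : A X m'} (hab : HEq a b) :
    HEq (X.δ i a) (X.δ i' b) := by
  subst e
  cases Fin.ext hi
  rw [eq_of_heq hab]

lemma mul_congr {m m' : ℕ} (e : m = m') {a a' : A X m} {b b' : A X m'}
    (h1 : HEq a b) (h2 : HEq a' b') : HEq (a * a') (b * b') := by
  subst e
  rw [eq_of_heq h1, eq_of_heq h2]

lemma heq_rec {m m' : ℕ} (c : m = m') (z : A X m) : HEq ((c ▸ z : A X m')) z := by
  subst c; rfl

lemma cup_def {p q : ℕ} (x : A X p) (y : A X q) :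
    cup X x y = front X p q x * (Nat.add_comm q p ▸ back X q p y) := rfl

lemma front_one (p q : ℕ) : front X p q (1 : A X p) = 1 := by
  induction q with
  | zero => rfl
  | succ q ih => show X.δ _ (front X p q 1) = 1; rw [ih]; exact map_one _

lemma back_one (q p : ℕ) : back X q p (1 : A X q) = 1 := by
  induction p with
  | zero => rfl
  | succ p ih => show X.δ _ (back X q p 1) = 1; rw [ih]; exact map_one _

end Aux
section Aux2
variable {k : Type} [Field k] (X : CosimplicialObject (AlgCat k))

lemma hom_congr {M N : AlgCat k} {f g : M ⟶ N} (h : f = g) (x : M) : f x = g x := by rw [h]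

lemma dd {n : ℕ} {i j : Fin (n + 2)} (H : i ≤ j) (w : A X n) :
    X.δ j.succ (X.δ i w) = X.δ (Fin.castSucc i) (X.δ j w) :=
  hom_congr (X.δ_comp_δ H) w

lemma ds_self {n : ℕ} {i : Fin (n + 1)} (w : A X n) : X.σ i (X.δ (Fin.castSucc i) w) = w :=
  hom_congr X.δ_comp_σ_self w

lemma ds_succ {n : ℕ} {i : Fin (n + 1)} (w : A X n) : X.σ i (X.δ i.succ w) = w :=
  hom_congr X.δ_comp_σ_succ w

lemma ds_le {n : ℕ} {i : Fin (n + 2)} {j : Fin (n + 1)} (H : i ≤ Fin.castSucc j)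
    (w : A X (n + 1)) : X.σ j.succ (X.δ (Fin.castSucc i) w) = X.δ i (X.σ j w) :=
  hom_congr (X.δ_comp_σ_of_le H) w

lemma ds_gt {n : ℕ} {i : Fin (n + 2)} {j : Fin (n + 1)} (H : Fin.castSucc j < i)
    (w : A X (n + 1)) : X.σ (Fin.castSucc j) (X.δ i.succ w) = X.δ i (X.σ j w) :=
  hom_congr (X.δ_comp_σ_of_gt H) w

lemma ss {n : ℕ} {i j : Fin (n + 1)} (H : i ≤ j) (w : A X (n + 2)) :
    X.σ j (X.σ (Fin.castSucc i) w) = X.σ i (X.σ j.succ w) :=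
  hom_congr (X.σ_comp_σ H) w

end Aux2
section Aux3
variable {k : Type} [Field k] (X : CosimplicialObject (AlgCat k))

lemma δ_front_le {p : ℕ} (x : A X p) :
    ∀ (q v : ℕ) (hv : v ≤ p),
      HEq (X.δ (⟨v, by omega⟩ : Fin (p + q + 2)) (front X p q x))
        (front X (p + 1) q (X.δ (⟨v, by omega⟩ : Fin (p + 2)) x))
  | 0, v, hv => HEq.rfl
  | q + 1, v, hv => by
    have h1 : X.δ (⟨v, by omega⟩ : Fin (p + (q + 1) + 2)) (front X p (q + 1) x)
        = X.δ (Fin.last (p + q + 2))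
            (X.δ (⟨v, by omega⟩ : Fin (p + q + 2)) (front X p q x)) :=
      (dd X (i := (⟨v, by omega⟩ : Fin (p + q + 2))) (j := Fin.last (p + q + 1))
        (by simp only [Fin.le_def, Fin.last]; omega) (front X p q x)).symm
    refine HEq.trans (heq_of_eq h1) ?_
    exact δ_congr X (by omega) (by simp only [Fin.val_last]; omega) (δ_front_le x q v hv)

lemma δ_front_gt {p : ℕ} (x : A X p) :
    ∀ (q v : ℕ) (hgt : p + 1 ≤ v) (hle : v ≤ p + q + 1),
      X.δ (⟨v, by omega⟩ : Fin (p + q + 2)) (front X p q x) = front X p (q + 1) x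
  | 0, v, h1, h2 => by
    have hv : v = p + 1 := by omega
    subst hv; rfl
  | q + 1, v, h1, h2 => by
    by_cases hc : v = p + q + 2
    · subst hc; rfl
    · have h2' : v ≤ p + q + 1 := by omega
      have key : X.δ (⟨v, by omega⟩ : Fin (p + (q + 1) + 2)) (front X p (q + 1) x)
          = X.δ (Fin.last (p + q + 2))
              (X.δ (⟨v, by omega⟩ : Fin (p + q + 2)) (front X p q x)) :=
        (dd X (i := (⟨v, by omega⟩ : Fin (p + q + 2))) (j := Fin.last (p + q + 1))
          (by simp only [Fin.le_def, Fin.last]; omega) (front X p q x)).symm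
      rw [key, δ_front_gt x q v h1 h2']
      rfl

lemma δ_back_le {q : ℕ} (y : A X q) :
    ∀ (p v : ℕ) (hv : v ≤ p),
      X.δ (⟨v, by omega⟩ : Fin (q + p + 2)) (back X q p y) = back X q (p + 1) y
  | 0, v, hv => by
    have : v = 0 := by omega
    subst this; rfl
  | p + 1, 0, hv => rfl
  | p + 1, u + 1, hv => by
    have key : X.δ (⟨u + 1, by omega⟩ : Fin (q + (p + 1) + 2)) (back X q (p + 1) y)
        = X.δ (0 : Fin (q + p + 3))
            (X.δ (⟨u, by omega⟩ : Fin (q + p + 2)) (back X q p y)) :=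
      dd X (i := (0 : Fin (q + p + 2))) (j := (⟨u, by omega⟩ : Fin (q + p + 2)))
        (by simp [Fin.le_def]) (back X q p y)
    rw [key, δ_back_le y p u (by omega)]
    rfl

lemma δ_back_gt {q : ℕ} (y : A X q) :
    ∀ (p v : ℕ) (hgt : p + 1 ≤ v) (hle : v ≤ q + p + 1),
      HEq (X.δ (⟨v, by omega⟩ : Fin (q + p + 2)) (back X q p y))
        (back X (q + 1) p (X.δ (⟨v - p, by omega⟩ : Fin (q + 2)) y))
  | 0, v, h1, h2 => HEq.rfl
  | p + 1, v, h1, h2 => by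
    obtain ⟨u, rfl⟩ : ∃ u, v = u + 1 := ⟨v - 1, by omega⟩
    have key : X.δ (⟨u + 1, by omega⟩ : Fin (q + (p + 1) + 2)) (back X q (p + 1) y)
        = X.δ (0 : Fin (q + p + 3))
            (X.δ (⟨u, by omega⟩ : Fin (q + p + 2)) (back X q p y)) :=
      dd X (i := (0 : Fin (q + p + 2))) (j := (⟨u, by omega⟩ : Fin (q + p + 2)))
        (by simp [Fin.le_def]) (back X q p y)
    simp only [Nat.add_sub_add_right]
    refine HEq.trans (heq_of_eq key) ?_
    exact δ_congr X (by omega) (by simp) (δ_back_gt y p u (by omega) (by omega))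

end Aux3
section Aux4
variable {k : Type} [Field k] (X : CosimplicialObject (AlgCat k))

lemma one_congr {m m' : ℕ} (e : m = m') : HEq (1 : A X m) (1 : A X m') := by subst e; rfl

lemma δ_cup_le {p q : ℕ} (x : A X p) (y : A X q) (v : ℕ) (hv : v ≤ p) :
    HEq (X.δ (⟨v, by omega⟩ : Fin (p + q + 2)) (cup X x y))
      (cup X (X.δ (⟨v, by omega⟩ : Fin (p + 2)) x) y) := by
  have h1 : X.δ (⟨v, by omega⟩ : Fin (p + q + 2)) (cup X x y)
      = X.δ (⟨v, by omega⟩ : Fin (p + q + 2)) (front X p q x)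
        * X.δ (⟨v, by omega⟩ : Fin (p + q + 2)) (Nat.add_comm q p ▸ back X q p y) :=
    map_mul _ _ _
  refine HEq.trans (heq_of_eq h1) ?_
  rw [cup_def]
  refine mul_congr X (by omega) (δ_front_le X x q v hv) ?_
  refine HEq.trans (δ_congr X (Nat.add_comm p q) (i' := (⟨v, by omega⟩ : Fin (q + p + 2))) rfl
    (heq_rec X (Nat.add_comm q p) (back X q p y))) ?_
  rw [δ_back_le X y p v hv]
  exact (heq_rec X (Nat.add_comm q (p + 1)) (back X q (p + 1) y)).symm

lemma δ_cup_gt {p q : ℕ} (x : A X p) (y : A X q) (v : ℕ) (h1 : p + 1 ≤ v)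
    (h2 : v ≤ p + q + 1) :
    X.δ (⟨v, by omega⟩ : Fin (p + q + 2)) (cup X x y)
      = cup X x (X.δ (⟨v - p, by omega⟩ : Fin (q + 2)) y) := by
  have hm : X.δ (⟨v, by omega⟩ : Fin (p + q + 2)) (cup X x y)
      = X.δ (⟨v, by omega⟩ : Fin (p + q + 2)) (front X p q x)
        * X.δ (⟨v, by omega⟩ : Fin (p + q + 2)) (Nat.add_comm q p ▸ back X q p y) :=
    map_mul _ _ _
  rw [hm, cup_def, δ_front_gt X x q v h1 h2]
  congr 1
  refine eq_of_heq (HEq.trans (δ_congr X (Nat.add_comm p q)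
    (i' := (⟨v, by omega⟩ : Fin (q + p + 2))) rfl
    (heq_rec X (Nat.add_comm q p) (back X q p y))) ?_)
  refine HEq.trans (δ_back_gt X y p v h1 (by omega)) ?_
  exact (heq_rec X (Nat.add_comm (q + 1) p) _).symm

lemma cup_one_left (n : ℕ) (y : A X n) :
    HEq (cup X (1 : A X 1) y) (X.δ (0 : Fin (n + 2)) y) := by
  have h1 : cup X (1 : A X 1) y = Nat.add_comm n 1 ▸ back X n 1 y := by
    show front X 1 n 1 * (Nat.add_comm n 1 ▸ back X n 1 y) = _
    rw [front_one, one_mul]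
  exact HEq.trans (heq_of_eq h1) (heq_rec X (Nat.add_comm n 1) (back X n 1 y))

lemma cup_one_right (n : ℕ) (y : A X n) :
    cup X y (1 : A X 1) = X.δ (Fin.last (n + 1)) y := by
  have h3 : HEq (Nat.add_comm 1 n ▸ back X 1 n (1 : A X 1) : A X (n + 1)) (1 : A X (n + 1)) := by
    refine HEq.trans (heq_rec X (Nat.add_comm 1 n) (back X 1 n 1)) ?_
    rw [back_one]
    exact one_congr X (by omega)
  calc cup X y (1 : A X 1)
      = front X n 1 y * (Nat.add_comm 1 n ▸ back X 1 n (1 : A X 1)) := rfl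
    _ = front X n 1 y * 1 := by rw [eq_of_heq h3]
    _ = X.δ (Fin.last (n + 1)) y := mul_one _

lemma mem_gensC0 (x : A X 0) : CupGen X (gensC X) 0 x := .of trivial
lemma mem_gensC1 (x : A X 1) : CupGen X (gensC X) 1 x := .of trivial

lemma gen_δ0 {n : ℕ} {x : A X n} (hx : CupGen X (gensC X) n x) :
    CupGen X (gensC X) (n + 1) (X.δ (0 : Fin (n + 2)) x) :=
  cupgen_heq X (Nat.add_comm 1 n ▸ rfl : n + 1 = 1 + n) (cup_one_left X n x).symm
    (.cup (mem_gensC1 X 1) hx)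

lemma gen_δlast {n : ℕ} {x : A X n} (hx : CupGen X (gensC X) n x) :
    CupGen X (gensC X) (n + 1) (X.δ (Fin.last (n + 1)) x) := by
  rw [← cup_one_right]
  exact .cup hx (mem_gensC1 X 1)

end Aux4
section Aux5
variable {k : Type} [Field k] (X : CosimplicialObject (AlgCat k))

lemma gensN_le : ∀ n, gensN X n ⊆ gensC X n
  | 0 => le_rfl
  | 1 => Set.subset_univ _
  | _ + 2 => le_rfl

/-- Degree-1 case: any coface of any element of `X¹` is generated. -/
lemma gen_δ_deg1 (h : ∀ n : ℕ, ∀ x ∈ Nrm X n, CupGen X (gensN X) n x)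
    (x : A X 1) (j : Fin 3) : CupGen X (gensC X) 2 (X.δ j x) := by
  have hx1 : CupGen X (gensC X) 1 x := mem_gensC1 X x
  set a := X.σ (0 : Fin 1) x with ha
  set ν := x - X.δ (1 : Fin 2) a with hνdef
  -- pointwise simplicial identities with literal indices
  have e1 : ∀ z : A X 0, X.σ (0 : Fin 1) (X.δ (1 : Fin 2) z) = z :=
    fun z => ds_succ X (i := (0 : Fin 1)) z
  have e2 : ∀ z : A X 1, X.σ (0 : Fin 2) (X.δ (0 : Fin 3) z) = z :=
    fun z => ds_self X (i := (0 : Fin 2)) z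
  have e3 : ∀ z : A X 1, X.σ (0 : Fin 2) (X.δ (1 : Fin 3) z) = z :=
    fun z => ds_succ X (i := (0 : Fin 2)) z
  have e4 : ∀ z : A X 1, X.σ (0 : Fin 2) (X.δ (2 : Fin 3) z) = X.δ (1 : Fin 2) (X.σ (0 : Fin 1) z) :=
    fun z => ds_gt X (i := (1 : Fin 2)) (j := (0 : Fin 1)) (by decide) z
  have e5 : ∀ z : A X 1, X.σ (1 : Fin 2) (X.δ (0 : Fin 3) z) = X.δ (0 : Fin 2) (X.σ (0 : Fin 1) z) :=
    fun z => ds_le X (i := (0 : Fin 2)) (j := (0 : Fin 1)) (by decide) z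
  have e6 : ∀ z : A X 1, X.σ (1 : Fin 2) (X.δ (1 : Fin 3) z) = z :=
    fun z => ds_self X (i := (1 : Fin 2)) z
  have e7 : ∀ z : A X 1, X.σ (1 : Fin 2) (X.δ (2 : Fin 3) z) = z :=
    fun z => ds_succ X (i := (1 : Fin 2)) z
  have hν : X.σ (0 : Fin 1) ν = 0 := by
    rw [hνdef, map_sub, e1 a]
    exact sub_self _
  set w := X.δ (0 : Fin 3) ν - X.δ (1 : Fin 3) ν + X.δ (2 : Fin 3) ν with hwdef
  have hw : w ∈ Nrm X 2 := by
    intro i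
    fin_cases i
    · show X.σ (0 : Fin 2) w = 0
      rw [hwdef, map_add, map_sub, e2 ν, e3 ν, e4 ν, hν, map_zero]
      abel
    · show X.σ (1 : Fin 2) w = 0
      rw [hwdef, map_add, map_sub, e5 ν, e6 ν, e7 ν, hν, map_zero]
      abel
  have hwgen : CupGen X (gensC X) 2 w := cupgen_mono X (gensN_le X) (h 2 w hw)
  have hν1 : CupGen X (gensC X) 1 ν := mem_gensC1 X ν
  have hδ1ν : CupGen X (gensC X) 2 (X.δ (1 : Fin 3) ν) := by
    have key : X.δ (1 : Fin 3) ν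
        = X.δ (0 : Fin 3) ν + X.δ (2 : Fin 3) ν + (-1 : k) • w := by
      rw [hwdef, neg_one_smul]
      abel
    rw [key]
    exact .add (.add (gen_δ0 X hν1) (gen_δlast X hν1)) (.smul _ hwgen)
  fin_cases j
  · show CupGen X (gensC X) 2 (X.δ (0 : Fin 3) x)
    exact gen_δ0 X hx1
  · show CupGen X (gensC X) 2 (X.δ (1 : Fin 3) x)
    have hxsplit : X.δ (1 : Fin 3) x
        = X.δ (1 : Fin 3) ν + X.δ (1 : Fin 3) (X.δ (1 : Fin 2) a) := by
      rw [← map_add]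
      congr 1
      rw [hνdef]
      abel
    have h11 : X.δ (1 : Fin 3) (X.δ (1 : Fin 2) a) = X.δ (Fin.last 2) (X.δ (1 : Fin 2) a) :=
      (dd X (i := (1 : Fin 2)) (j := (1 : Fin 2)) le_rfl a).symm
    rw [hxsplit, h11]
    exact .add hδ1ν (gen_δlast X (mem_gensC1 X _))
  · show CupGen X (gensC X) 2 (X.δ (2 : Fin 3) x)
    exact gen_δlast X hx1

end Aux5
section Aux6
variable {k : Type} [Field k] (X : CosimplicialObject (AlgCat k))

/-- Every coface of a generated element is generated. -/
lemma gen_δ (h : ∀ n : ℕ, ∀ x ∈ Nrm X n, CupGen X (gensN X) n x) :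
    ∀ {n : ℕ} {x : A X n}, CupGen X (gensC X) n x →
      ∀ j : Fin (n + 2), CupGen X (gensC X) (n + 1) (X.δ j x) := by
  intro n x hx
  induction hx with
  | @of m y hy =>
    match m, y, hy with
    | 0, y, _ => exact fun j => mem_gensC1 X _
    | 1, y, _ => exact fun j => gen_δ_deg1 X h y j
    | m + 2, y, hy => exact absurd hy (by simp [gensC])
  | zero =>
    intro j
    rw [map_zero]
    exact .zero
  | add _ _ iha ihb =>
    intro j
    rw [map_add]
    exact .add (iha j) (ihb j)
  | smul c _ iha =>
    intro j
    rw [map_smul]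
    exact .smul c (iha j)
  | @cup p q a b hga hgb iha ihb =>
    rintro ⟨v, hvlt⟩
    by_cases hc : v ≤ p
    · exact cupgen_heq X (by omega : p + q + 1 = (p + 1) + q)
        (δ_cup_le X a b v hc) (.cup (iha ⟨v, by omega⟩) hgb)
    · exact cupgen_heq X (rfl : p + q + 1 = p + (q + 1))
        (heq_of_eq (δ_cup_gt X a b v (by omega) (by omega)))
        (.cup hga (ihb ⟨v - p, by omega⟩))

end Aux6
section Aux7
variable {k : Type} [Field k] (X : CosimplicialObject (AlgCat k))

lemma ds_succ'' {m : ℕ} (jv : ℕ) (hj : jv < m + 1) (z : A X m) :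
    X.σ (⟨jv, hj⟩ : Fin (m + 1)) (X.δ (⟨jv + 1, by omega⟩ : Fin (m + 2)) z) = z :=
  ds_succ X (i := ⟨jv, hj⟩) z

lemma ds_gt'' {m : ℕ} (jv iv : ℕ) (hj : jv < m + 2) (hi : iv < jv) (z : A X (m + 1)) :
    X.σ (⟨iv, by omega⟩ : Fin (m + 2)) (X.δ (⟨jv + 1, by omega⟩ : Fin (m + 3)) z)
      = X.δ (⟨jv, by omega⟩ : Fin (m + 2)) (X.σ (⟨iv, by omega⟩ : Fin (m + 1)) z) :=
  ds_gt X (i := ⟨jv, by omega⟩) (j := ⟨iv, by omega⟩)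
    (by simp only [Fin.lt_def, Fin.castSucc_mk]; omega) z

lemma ss'' {m : ℕ} (jv iv : ℕ) (hj : jv < m + 2) (hi : iv < jv) (z : A X (m + 2)) :
    X.σ (⟨iv, by omega⟩ : Fin (m + 1)) (X.σ (⟨jv, by omega⟩ : Fin (m + 2)) z)
      = X.σ (⟨jv - 1, by omega⟩ : Fin (m + 1)) (X.σ (⟨iv, by omega⟩ : Fin (m + 2)) z) := by
  obtain ⟨ju, rfl⟩ : ∃ ju, jv = ju + 1 := ⟨jv - 1, by omega⟩
  exact (ss X (i := ⟨iv, by omega⟩) (j := ⟨ju, by omega⟩)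
    (by simp only [Fin.le_def]; omega) z).symm

lemma partial_gen (h : ∀ n : ℕ, ∀ x ∈ Nrm X n, CupGen X (gensN X) n x) (m : ℕ)
    (IHm : ∀ y : A X m, CupGen X (gensC X) m y) :
    ∀ t : ℕ, t ≤ m + 1 → ∀ x : A X (m + 1),
      (∀ i : Fin (m + 1), (i : ℕ) < m + 1 - t → X.σ i x = 0) →
      CupGen X (gensC X) (m + 1) x := by
  intro t
  induction t with
  | zero =>
    intro _ x hx
    exact cupgen_mono X (gensN_le X)
      (h (m + 1) x (fun i => hx i (by have := i.isLt; omega)))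
  | succ t iht =>
    intro ht x hx
    have hjlt : m - t < m + 1 := by omega
    have hj1lt : m - t + 1 < m + 2 := by omega
    set a := X.σ (⟨m - t, hjlt⟩ : Fin (m + 1)) x with hadef
    set x' := x - X.δ (⟨m - t + 1, hj1lt⟩ : Fin (m + 2)) a with hx'def
    have hx'0 : ∀ i : Fin (m + 1), (i : ℕ) < m + 1 - t → X.σ i x' = 0 := by
      rintro ⟨iv, hivlt⟩ hi
      have hi' : iv < m + 1 - t := hi
      rw [hx'def, map_sub]
      by_cases hij : iv = m - t
      · subst hij
        rw [ds_succ'' X (m - t) hjlt a, hadef]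
        exact sub_self _
      · have hlt : iv < m - t := by omega
        obtain ⟨m', rfl⟩ : ∃ m', m = m' + 1 := ⟨m - 1, by omega⟩
        have h0 : X.σ (⟨iv, by omega⟩ : Fin (m' + 2)) x = 0 :=
          hx ⟨iv, by omega⟩ (by show iv < m' + 1 + 1 - (t + 1); omega)
        rw [ds_gt'' X (m' + 1 - t) iv hjlt hlt a, hadef,
          ss'' X (m' + 1 - t) iv hjlt hlt x, h0, map_zero, map_zero]
        exact sub_self 0
    have hxeq : x = x' + X.δ (⟨m - t + 1, hj1lt⟩ : Fin (m + 2)) a := by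
      rw [hx'def]; abel
    rw [hxeq]
    exact .add (iht (by omega) x' hx'0) (gen_δ X h (IHm a) ⟨m - t + 1, hj1lt⟩)

end Aux7

/-- Lemma `NA_01gen_CA`.  If a cosimplicial (not necessarily
commutative) `k`-algebra `X` is `[0,1]`-generated — i.e. every normalized element is
generated by `N⁰(X)` and `N¹(X)` under cup products and `k`-linear sums — then the
total DG algebra `C(X)` is also generated in degrees `0` and `1` under the cup product
and `k`-linear sums. -/
theorem total_generated_of_normalized_generated (X : CosimplicialObject (AlgCat k))
    (h : ∀ n : ℕ, ∀ x ∈ Nrm X n, CupGen X (gensN X) n x) :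
    ∀ (n : ℕ) (x : A X n), CupGen X (gensC X) n x := by
  intro n
  induction n with
  | zero => exact fun x => mem_gensC0 X x
  | succ m IH =>
    intro x
    exact partial_gen X h m IH (m + 1) le_rfl x (fun i hi => absurd hi (by omega))

end Stmt16
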